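/- Let M : [0,∞) → ℝ^{n×n} be continuously differentiable with ‖M(t)‖ ≤ L for all t ≥ 0 and sup_{t≥0} s₁(M(t)) < 0, where s₁ is the largest real part of the eigenvalues. Suppose γ₁ > 0 is a finite constant such that ‖∫₀^∞ exp(M(t)ᵀτ) exp(M(t)τ) dτ‖ ≤ γ₁ for all t ≥ 0, and that sup_{t≥0} ‖Ṁ(t)‖ < 1/(2γ₁²). Then the origin of the linear time-varying system ẋ(t) = M(t)x(t) is globally exponentially stable: there exist c, λ > 0 such that every solution satisfies ‖x(t)‖ ≤ c e^{−λt} ‖x(0)‖ for all t ≥ 0. -/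

import Mathlib

open Matrix MeasureTheory

/-- Euclidean norm of a vector in `ℝⁿ`. -/
noncomputable def eucNorm {n : ℕ} (x : Fin n → ℝ) : ℝ := Real.sqrt (∑ i, x i ^ 2)

/-- Induced 2-norm of a real matrix. -/
noncomputable def mnorm {m n : ℕ} (M : Matrix (Fin m) (Fin n) ℝ) : ℝ :=
  ‖LinearMap.toContinuousLinearMap (Matrix.toEuclideanLin M)‖

/-- Matrix exponential. -/
noncomputable def mexp {n : ℕ} (M : Matrix (Fin n) (Fin n) ℝ) : Matrix (Fin n) (Fin n) ℝ :=
  NormedSpace.exp M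

/-- The observability Gramian `∫₀^∞ exp(Mᵀτ) exp(Mτ) dτ`, defined entrywise. -/
noncomputable def gram {n : ℕ} (M : Matrix (Fin n) (Fin n) ℝ) : Matrix (Fin n) (Fin n) ℝ :=
  Matrix.of fun i j => ∫ τ in Set.Ici (0 : ℝ), (mexp (τ • Mᵀ) * mexp (τ • M)) i j

namespace LTVaux
open Set Filter Real
open scoped Matrix.Norms.L2Operator Topology

variable {n : ℕ}

lemma mnorm_eq_norm (A : Matrix (Fin n) (Fin n) ℝ) : mnorm A = ‖A‖ := rfl

lemma eucNorm_eq (v : Fin n → ℝ) :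
    eucNorm v = ‖(WithLp.equiv 2 (Fin n → ℝ)).symm v‖ := by
  rw [EuclideanSpace.norm_eq]
  unfold eucNorm
  congr 1
  refine Finset.sum_congr rfl fun i _ => ?_
  rw [WithLp.equiv_symm_apply, PiLp.toLp_apply, Real.norm_eq_abs, sq_abs]

lemma eucNorm_nonneg (v : Fin n → ℝ) : 0 ≤ eucNorm v := Real.sqrt_nonneg _

lemma eucNorm_sq (v : Fin n → ℝ) : eucNorm v ^ 2 = v ⬝ᵥ v := by
  unfold eucNorm
  rw [Real.sq_sqrt (Finset.sum_nonneg fun i _ => sq_nonneg _)]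
  simp [dotProduct, sq]

lemma dot_self_nonneg (v : Fin n → ℝ) : 0 ≤ v ⬝ᵥ v :=
  Finset.sum_nonneg fun i _ => mul_self_nonneg _

lemma dot_eq_inner (u v : Fin n → ℝ) :
    u ⬝ᵥ v = (inner ℝ ((WithLp.equiv 2 (Fin n → ℝ)).symm u)
      ((WithLp.equiv 2 (Fin n → ℝ)).symm v) : ℝ) := by
  simp [PiLp.inner_apply, dotProduct, WithLp.equiv_symm_apply, PiLp.toLp_apply, RCLike.inner_apply,
    mul_comm]

lemma abs_dot_le (u v : Fin n → ℝ) : |u ⬝ᵥ v| ≤ eucNorm u * eucNorm v := by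
  rw [dot_eq_inner, eucNorm_eq, eucNorm_eq]
  exact abs_real_inner_le_norm _ _

lemma eucNorm_mulVec_le (A : Matrix (Fin n) (Fin n) ℝ) (v : Fin n → ℝ) :
    eucNorm (A *ᵥ v) ≤ mnorm A * eucNorm v := by
  rw [eucNorm_eq, eucNorm_eq, mnorm_eq_norm]
  exact A.l2_opNorm_mulVec ((WithLp.equiv 2 (Fin n → ℝ)).symm v)

lemma dot_symm (S : Matrix (Fin n) (Fin n) ℝ) (h : Sᵀ = S) (u v : Fin n → ℝ) :
    u ⬝ᵥ (S *ᵥ v) = v ⬝ᵥ (S *ᵥ u) := by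
  rw [Matrix.dotProduct_mulVec, ← Matrix.mulVec_transpose, h, dotProduct_comm]

lemma mexp_transpose (A : Matrix (Fin n) (Fin n) ℝ) (τ : ℝ) :
    mexp (τ • Aᵀ) = (mexp (τ • A))ᵀ := by
  rw [← Matrix.transpose_smul]
  exact Matrix.exp_transpose _

lemma gram_symm (A : Matrix (Fin n) (Fin n) ℝ) : (gram A)ᵀ = gram A := by
  ext i j
  show gram A j i = gram A i j
  unfold _root_.gram
  simp only [Matrix.of_apply]
  congr 1
  funext τ
  rw [mexp_transpose, Matrix.mul_apply, Matrix.mul_apply]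
  simp only [Matrix.transpose_apply]
  exact Finset.sum_congr rfl fun k _ => mul_comm _ _

lemma hasDerivAt_mexp (A : Matrix (Fin n) (Fin n) ℝ) (τ : ℝ) :
    HasDerivAt (fun s : ℝ => mexp (s • A)) (mexp (τ • A) * A) τ :=
  hasDerivAt_exp_smul_const A τ

lemma mexp_comm (A : Matrix (Fin n) (Fin n) ℝ) (τ : ℝ) :
    mexp (τ • A) * A = A * mexp (τ • A) :=
  (((Commute.refl A).smul_left τ).exp_left).eq

lemma mexp_zero (A : Matrix (Fin n) (Fin n) ℝ) : mexp ((0:ℝ) • A) = 1 := by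
  rw [zero_smul]; exact NormedSpace.exp_zero

noncomputable def entryCLM (i j : Fin n) : Matrix (Fin n) (Fin n) ℝ →L[ℝ] ℝ :=
  LinearMap.toContinuousLinearMap
    { toFun := fun A : Matrix (Fin n) (Fin n) ℝ => A i j,
      map_add' := fun _ _ => rfl,
      map_smul' := fun _ _ => rfl }

lemma hasDerivAt_entry {F : ℝ → Matrix (Fin n) (Fin n) ℝ} {F' : Matrix (Fin n) (Fin n) ℝ}
    {τ : ℝ} (h : HasDerivAt F F' τ) (i j : Fin n) :
    HasDerivAt (fun s => F s i j) (F' i j) τ :=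
  ((entryCLM i j).hasFDerivAt.comp_hasDerivAt τ h : HasDerivAt (fun s => entryCLM i j (F s)) _ τ)

lemma hasDerivAt_yvec (A : Matrix (Fin n) (Fin n) ℝ) (v : Fin n → ℝ) (τ : ℝ) (i : Fin n) :
    HasDerivAt (fun s : ℝ => (mexp (s • A) *ᵥ v) i)
      ((A *ᵥ (mexp (τ • A) *ᵥ v)) i) τ := by
  have h2 : ∀ a b, HasDerivAt (fun s => mexp (s • A) a b) ((mexp (τ • A) * A) a b) τ :=
    fun a b => hasDerivAt_entry (hasDerivAt_mexp A τ) a b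
  have key : (A *ᵥ (mexp (τ • A) *ᵥ v)) i = ∑ j, (mexp (τ • A) * A) i j * v j := by
    rw [Matrix.mulVec_mulVec, ← mexp_comm]; rfl
  rw [key]
  show HasDerivAt (fun s => ∑ j, mexp (s • A) i j * v j) _ τ
  exact HasDerivAt.fun_sum fun j _ => (h2 i j).mul_const (v j)

lemma continuous_yvec (A : Matrix (Fin n) (Fin n) ℝ) (v : Fin n → ℝ) (i : Fin n) :
    Continuous (fun s : ℝ => (mexp (s • A) *ᵥ v) i) :=
  continuous_iff_continuousAt.2 fun τ => (hasDerivAt_yvec A v τ i).continuousAt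

noncomputable def gq (A : Matrix (Fin n) (Fin n) ℝ) (u v : Fin n → ℝ) (τ : ℝ) : ℝ :=
  (mexp (τ • A) *ᵥ u) ⬝ᵥ (mexp (τ • A) *ᵥ v)

lemma dot_sum_expand (S : Matrix (Fin n) (Fin n) ℝ) (hS : Sᵀ = S) (u v : Fin n → ℝ) :
    (S *ᵥ u) ⬝ᵥ v = ∑ p : Fin n × Fin n, u p.1 * v p.2 * S p.1 p.2 := by
  simp only [dotProduct, Matrix.mulVec, dotProduct, Fintype.sum_prod_type, Finset.sum_mul]
  rw [Finset.sum_comm]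
  refine Finset.sum_congr rfl fun i _ => Finset.sum_congr rfl fun j _ => ?_
  have h := congrFun (congrFun hS i) j
  rw [Matrix.transpose_apply] at h
  rw [← h]; ring

lemma gq_eq_sum (A : Matrix (Fin n) (Fin n) ℝ) (u v : Fin n → ℝ) (τ : ℝ) :
    gq A u v τ = ∑ p : Fin n × Fin n,
      u p.1 * v p.2 * ((mexp (τ • Aᵀ) * mexp (τ • A)) p.1 p.2) := by
  rw [mexp_transpose]
  have hsymm : ((mexp (τ • A))ᵀ * mexp (τ • A))ᵀ = (mexp (τ • A))ᵀ * mexp (τ • A) := by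
    rw [Matrix.transpose_mul, Matrix.transpose_transpose]
  have e1 : gq A u v τ = (((mexp (τ • A))ᵀ * mexp (τ • A)) *ᵥ u) ⬝ᵥ v := by
    unfold gq
    rw [← Matrix.mulVec_mulVec, Matrix.mulVec_transpose, ← Matrix.dotProduct_mulVec,
      dotProduct_comm]
  rw [e1, dot_sum_expand _ hsymm]


section FixedA

variable {A : Matrix (Fin n) (Fin n) ℝ}

lemma gq_integrable (hAi : ∀ i j, IntegrableOn
      (fun τ => (mexp (τ • Aᵀ) * mexp (τ • A)) i j) (Set.Ici (0 : ℝ)))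
    (u v : Fin n → ℝ) : IntegrableOn (gq A u v) (Ioi (0:ℝ)) := by
  have : gq A u v = fun τ => ∑ p : Fin n × Fin n,
      u p.1 * v p.2 * ((mexp (τ • Aᵀ) * mexp (τ • A)) p.1 p.2) :=
    funext fun τ => gq_eq_sum A u v τ
  rw [this]
  exact integrable_finset_sum _ fun p _ =>
    (((hAi p.1 p.2).mono_set Ioi_subset_Ici_self).const_mul _)

lemma integral_gq (hAi : ∀ i j, IntegrableOn
      (fun τ => (mexp (τ • Aᵀ) * mexp (τ • A)) i j) (Set.Ici (0 : ℝ)))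
    (u v : Fin n → ℝ) :
    ∫ τ in Ioi (0:ℝ), gq A u v τ = u ⬝ᵥ (gram A *ᵥ v) := by
  have h1 : ∫ τ in Ioi (0:ℝ), gq A u v τ = ∑ p : Fin n × Fin n,
      u p.1 * v p.2 * gram A p.1 p.2 := by
    simp only [gq_eq_sum A u v]
    rw [integral_finset_sum _ fun p _ =>
      (((hAi p.1 p.2).mono_set Ioi_subset_Ici_self).const_mul _)]
    refine Finset.sum_congr rfl fun p _ => ?_
    rw [integral_const_mul]
    congr 1
    show _ = ∫ τ in Ici (0:ℝ), (mexp (τ • Aᵀ) * mexp (τ • A)) p.1 p.2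
    rw [integral_Ici_eq_integral_Ioi]
  rw [h1]
  simp only [dotProduct, Matrix.mulVec, dotProduct, Fintype.sum_prod_type, Finset.mul_sum]
  exact Finset.sum_congr rfl fun i _ => Finset.sum_congr rfl fun j _ => by ring

end FixedA

section FixedAL

variable {A : Matrix (Fin n) (Fin n) ℝ} {L : ℝ}

lemma gq_self_nonneg (v : Fin n → ℝ) (τ : ℝ) : 0 ≤ gq A v v τ := dot_self_nonneg _

lemma gq_self_eq_sq (v : Fin n → ℝ) (τ : ℝ) :
    gq A v v τ = eucNorm (mexp (τ • A) *ᵥ v) ^ 2 := (eucNorm_sq _).symm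

lemma continuous_gq (u v : Fin n → ℝ) : Continuous (gq A u v) := by
  unfold gq
  simp only [dotProduct]
  exact continuous_finset_sum _ fun i _ =>
    (continuous_yvec A u i).mul (continuous_yvec A v i)

lemma gq_shift (v : Fin n → ℝ) (τ : ℝ) :
    gq A v (A *ᵥ v) τ = (mexp (τ • A) *ᵥ v) ⬝ᵥ (A *ᵥ (mexp (τ • A) *ᵥ v)) := by
  unfold gq
  rw [Matrix.mulVec_mulVec, mexp_comm, ← Matrix.mulVec_mulVec]

lemma hasDerivAt_dot {y w : ℝ → Fin n → ℝ} {z q : Fin n → ℝ} {s : ℝ}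
    (hy : ∀ i, HasDerivAt (fun t => y t i) (z i) s)
    (hw : ∀ i, HasDerivAt (fun t => w t i) (q i) s) :
    HasDerivAt (fun t => y t ⬝ᵥ w t) (z ⬝ᵥ w s + y s ⬝ᵥ q) s := by
  have : HasDerivAt (fun t => ∑ i, y t i * w t i)
      (∑ i, (z i * w s i + y s i * q i)) s :=
    HasDerivAt.fun_sum fun i _ => (hy i).mul (hw i)
  simpa [dotProduct, Finset.sum_add_distrib] using this

lemma hasDerivAt_gq_self (v : Fin n → ℝ) (τ : ℝ) :
    HasDerivAt (gq A v v) (2 * gq A v (A *ᵥ v) τ) τ := by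
  have h : HasDerivAt (fun t => (mexp (t • A) *ᵥ v) ⬝ᵥ (mexp (t • A) *ᵥ v))
      ((A *ᵥ (mexp (τ • A) *ᵥ v)) ⬝ᵥ (mexp (τ • A) *ᵥ v)
        + (mexp (τ • A) *ᵥ v) ⬝ᵥ (A *ᵥ (mexp (τ • A) *ᵥ v))) τ :=
    hasDerivAt_dot (hasDerivAt_yvec A v τ) (hasDerivAt_yvec A v τ)
  have e : 2 * gq A v (A *ᵥ v) τ = (A *ᵥ (mexp (τ • A) *ᵥ v)) ⬝ᵥ (mexp (τ • A) *ᵥ v)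
      + (mexp (τ • A) *ᵥ v) ⬝ᵥ (A *ᵥ (mexp (τ • A) *ᵥ v)) := by
    rw [gq_shift, dotProduct_comm]; ring
  rw [show gq A v v = fun t => (mexp (t • A) *ᵥ v) ⬝ᵥ (mexp (t • A) *ᵥ v) from rfl, e]
  exact h

variable (hA : mnorm A ≤ L)
include hA

lemma L_nonneg : (0:ℝ) ≤ L := le_trans (by rw [mnorm_eq_norm]; exact norm_nonneg A) hA

lemma gq_deriv_bound (v : Fin n → ℝ) (τ : ℝ) :
    |2 * gq A v (A *ᵥ v) τ| ≤ 2 * L * gq A v v τ := by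
  set y := mexp (τ • A) *ᵥ v
  have h1 : |gq A v (A *ᵥ v) τ| ≤ L * gq A v v τ := by
    rw [gq_shift]
    calc |y ⬝ᵥ (A *ᵥ y)| ≤ eucNorm y * eucNorm (A *ᵥ y) := abs_dot_le _ _
      _ ≤ eucNorm y * (mnorm A * eucNorm y) := by
          exact mul_le_mul_of_nonneg_left (eucNorm_mulVec_le A y) (eucNorm_nonneg y)
      _ ≤ L * gq A v v τ := by
          rw [gq_self_eq_sq]
          nlinarith [eucNorm_nonneg y, mnorm_eq_norm A ▸ norm_nonneg A, hA,
            sq_nonneg (eucNorm y)]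
  calc |2 * gq A v (A *ᵥ v) τ| = 2 * |gq A v (A *ᵥ v) τ| := by rw [abs_mul]; simp
    _ ≤ 2 * (L * gq A v v τ) := by linarith [h1]
    _ = 2 * L * gq A v v τ := by ring

lemma gq_le_of_le (v : Fin n → ℝ) {s τ : ℝ} (hsτ : s ≤ τ) :
    gq A v v τ ≤ gq A v v s * Real.exp (2 * L * (τ - s)) := by
  set f := gq A v v with hf
  have hexp : ∀ u : ℝ, HasDerivAt (fun t : ℝ => Real.exp (-(2 * L) * t))
      (-(2 * L) * Real.exp (-(2 * L) * u)) u := by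
    intro u
    simpa [mul_comm] using ((hasDerivAt_id u).const_mul (-(2 * L))).exp
  have hF : ∀ u : ℝ, HasDerivAt (fun t => f t * Real.exp (-(2 * L) * t))
      ((2 * gq A v (A *ᵥ v) u) * Real.exp (-(2 * L) * u)
        + f u * (-(2 * L) * Real.exp (-(2 * L) * u))) u :=
    fun u => (hasDerivAt_gq_self v u).mul (hexp u)
  have hanti : Antitone (fun t => f t * Real.exp (-(2 * L) * t)) := by
    apply antitone_of_deriv_nonpos
    · intro u; exact (hF u).differentiableAt
    · intro u
      rw [(hF u).deriv]
      have h1 := gq_deriv_bound hA v u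
      have h2 := (abs_le.1 h1).2
      have h3 := Real.exp_pos (-(2 * L) * u)
      nlinarith
  have h := hanti hsτ
  have hepos : (0:ℝ) < Real.exp (-(2 * L) * τ) := Real.exp_pos _
  have key : f τ * Real.exp (-(2 * L) * τ)
      ≤ (f s * Real.exp (2 * L * (τ - s))) * Real.exp (-(2 * L) * τ) := by
    calc f τ * Real.exp (-(2 * L) * τ) ≤ f s * Real.exp (-(2 * L) * s) := h
      _ = (f s * Real.exp (2 * L * (τ - s))) * Real.exp (-(2 * L) * τ) := by
          rw [mul_assoc, ← Real.exp_add]; congr 2; ring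
  exact le_of_mul_le_mul_right key hepos

lemma gq_lower (v : Fin n → ℝ) {τ : ℝ} (hτ : 0 ≤ τ) :
    (v ⬝ᵥ v) * Real.exp (-(2 * L) * τ) ≤ gq A v v τ := by
  set f := gq A v v with hf
  have hexp : ∀ u : ℝ, HasDerivAt (fun t : ℝ => Real.exp (2 * L * t))
      (2 * L * Real.exp (2 * L * u)) u := by
    intro u
    simpa [mul_comm] using ((hasDerivAt_id u).const_mul (2 * L)).exp
  have hF : ∀ u : ℝ, HasDerivAt (fun t => f t * Real.exp (2 * L * t))
      ((2 * gq A v (A *ᵥ v) u) * Real.exp (2 * L * u)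
        + f u * (2 * L * Real.exp (2 * L * u))) u :=
    fun u => (hasDerivAt_gq_self v u).mul (hexp u)
  have hmono : Monotone (fun t => f t * Real.exp (2 * L * t)) := by
    apply monotone_of_deriv_nonneg
    · intro u; exact (hF u).differentiableAt
    · intro u
      rw [(hF u).deriv]
      have h1 := gq_deriv_bound hA v u
      have h2 := (abs_le.1 h1).1
      have h3 := Real.exp_pos (2 * L * u)
      nlinarith
  have h := hmono hτ
  have hf0 : f 0 = v ⬝ᵥ v := by
    show gq A v v 0 = v ⬝ᵥ v
    unfold gq
    rw [mexp_zero, Matrix.one_mulVec]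
  simp only [mul_zero, Real.exp_zero, mul_one, hf0] at h
  have hepos : (0:ℝ) < Real.exp (2 * L * τ) := Real.exp_pos _
  have : (v ⬝ᵥ v) * Real.exp (-(2 * L) * τ) * Real.exp (2 * L * τ) ≤ f τ * Real.exp (2 * L * τ) := by
    calc (v ⬝ᵥ v) * Real.exp (-(2 * L) * τ) * Real.exp (2 * L * τ)
        = v ⬝ᵥ v := by rw [mul_assoc, ← Real.exp_add]; simp
      _ ≤ f τ * Real.exp (2 * L * τ) := h
  exact le_of_mul_le_mul_right this hepos

end FixedAL


lemma gq_tendsto_zero {A : Matrix (Fin n) (Fin n) ℝ} {L : ℝ} (hA : mnorm A ≤ L)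
    (hAi : ∀ i j, IntegrableOn
      (fun τ => (mexp (τ • Aᵀ) * mexp (τ • A)) i j) (Set.Ici (0 : ℝ)))
    (v : Fin n → ℝ) : Tendsto (gq A v v) atTop (𝓝 0) := by
  set f := gq A v v with hfdef
  have hL0 : 0 ≤ L := L_nonneg hA
  have hfc : Continuous f := continuous_gq _ _
  have hfi : IntegrableOn f (Ioi (0:ℝ)) := gq_integrable hAi v v
  have hint : ∀ a b : ℝ, IntervalIntegrable f volume a b := fun a b => hfc.intervalIntegrable a b
  have hF : Tendsto (fun T => ∫ τ in (0:ℝ)..T, f τ) atTop (𝓝 (∫ τ in Ioi (0:ℝ), f τ)) :=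
    intervalIntegral_tendsto_integral_Ioi 0 hfi tendsto_id
  have hFm : Tendsto (fun T : ℝ => ∫ τ in (0:ℝ)..(T-1), f τ) atTop
      (𝓝 (∫ τ in Ioi (0:ℝ), f τ)) :=
    hF.comp (tendsto_atTop_add_const_right atTop (-1) tendsto_id)
  have hG : Tendsto (fun T => (∫ τ in (0:ℝ)..T, f τ) - ∫ τ in (0:ℝ)..(T-1), f τ)
      atTop (𝓝 0) := by
    simpa using hF.sub hFm
  have key : ∀ᶠ T in atTop, f T ≤ Real.exp (2*L) *
      ((∫ τ in (0:ℝ)..T, f τ) - ∫ τ in (0:ℝ)..(T-1), f τ) := by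
    filter_upwards [eventually_ge_atTop (1:ℝ)] with T hT
    have hsub : (∫ τ in (0:ℝ)..T, f τ) - ∫ τ in (0:ℝ)..(T-1), f τ = ∫ τ in (T-1)..T, f τ :=
      intervalIntegral.integral_interval_sub_left (hint 0 T) (hint 0 (T-1))
    rw [hsub]
    have h1 : ∀ s ∈ Icc (T-1) T, f T * Real.exp (-(2*L)) ≤ f s := by
      intro s hs
      have h2 := gq_le_of_le hA v hs.2
      have h3 : Real.exp (2*L*(T - s)) ≤ Real.exp (2*L) := by
        apply Real.exp_le_exp.2; nlinarith [hs.1]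
      have h4 : f T ≤ f s * Real.exp (2*L) :=
        le_trans h2 (mul_le_mul_of_nonneg_left h3 (gq_self_nonneg v s))
      have h5 : f T * Real.exp (-(2*L)) ≤ f s * Real.exp (2*L) * Real.exp (-(2*L)) :=
        mul_le_mul_of_nonneg_right h4 (Real.exp_pos _).le
      have h6 : Real.exp (2*L) * Real.exp (-(2*L)) = 1 := by rw [← Real.exp_add]; simp
      rw [mul_assoc, h6, mul_one] at h5
      exact h5
    have h7 : ∫ _ in (T-1)..T, f T * Real.exp (-(2*L)) ≤ ∫ s in (T-1)..T, f s := by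
      apply intervalIntegral.integral_mono_on (by linarith) intervalIntegrable_const (hint _ _) h1
    rw [intervalIntegral.integral_const] at h7
    have h8 : (T - (T-1)) • (f T * Real.exp (-(2*L))) = f T * Real.exp (-(2*L)) := by
      rw [show T - (T-1) = (1:ℝ) by ring, one_smul]
    rw [h8] at h7
    have h6' : Real.exp (-(2*L)) * Real.exp (2*L) = 1 := by rw [← Real.exp_add]; simp
    have h9 := mul_le_mul_of_nonneg_right h7 (Real.exp_pos (2*L)).le
    calc f T = f T * Real.exp (-(2*L)) * Real.exp (2*L) := by rw [mul_assoc, h6', mul_one]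
      _ ≤ (∫ s in (T-1)..T, f s) * Real.exp (2*L) := h9
      _ = Real.exp (2*L) * ∫ s in (T-1)..T, f s := by ring
  have hlim : Tendsto (fun T => Real.exp (2*L) *
      ((∫ τ in (0:ℝ)..T, f τ) - ∫ τ in (0:ℝ)..(T-1), f τ)) atTop (𝓝 0) := by
    simpa using hG.const_mul (Real.exp (2*L))
  exact squeeze_zero' (Eventually.of_forall fun T => gq_self_nonneg v T) key hlim

lemma quad_lower {A : Matrix (Fin n) (Fin n) ℝ} {L : ℝ} (hA : mnorm A ≤ L)
    (hAi : ∀ i j, IntegrableOn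
      (fun τ => (mexp (τ • Aᵀ) * mexp (τ • A)) i j) (Set.Ici (0 : ℝ)))
    (v : Fin n → ℝ) :
    (v ⬝ᵥ v) * Real.exp (-(2 * L)) ≤ v ⬝ᵥ (gram A *ᵥ v) := by
  have hL0 : 0 ≤ L := L_nonneg hA
  rw [← integral_gq hAi v v]
  set f := gq A v v with hfdef
  have hfi : IntegrableOn f (Ioi (0:ℝ)) := gq_integrable hAi v v
  have h1 : ∫ τ in Ioc (0:ℝ) 1, f τ ≤ ∫ τ in Ioi (0:ℝ), f τ :=
    setIntegral_mono_set hfi (Filter.Eventually.of_forall fun τ => gq_self_nonneg v τ)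
      (HasSubset.Subset.eventuallyLE Ioc_subset_Ioi_self)
  have h2 : ∫ _ in Ioc (0:ℝ) 1, ((v ⬝ᵥ v) * Real.exp (-(2*L))) ≤ ∫ τ in Ioc (0:ℝ) 1, f τ := by
    apply setIntegral_mono_on
    · exact integrableOn_const measure_Ioc_lt_top.ne
    · exact hfi.mono_set Ioc_subset_Ioi_self
    · exact measurableSet_Ioc
    · intro τ hτ
      have hg := gq_lower hA v (le_of_lt hτ.1)
      have h3 : Real.exp (-(2*L)) ≤ Real.exp (-(2*L)*τ) := by
        apply Real.exp_le_exp.2; nlinarith [hτ.2]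
      have h4 := dot_self_nonneg v
      nlinarith
  have h4 : ∫ _ in Ioc (0:ℝ) 1, ((v ⬝ᵥ v) * Real.exp (-(2*L))) = (v ⬝ᵥ v) * Real.exp (-(2*L)) := by
    rw [setIntegral_const, Real.volume_real_Ioc]
    norm_num
  linarith

lemma lyap {A : Matrix (Fin n) (Fin n) ℝ} {L : ℝ} (hA : mnorm A ≤ L)
    (hAi : ∀ i j, IntegrableOn
      (fun τ => (mexp (τ • Aᵀ) * mexp (τ • A)) i j) (Set.Ici (0 : ℝ)))
    (v : Fin n → ℝ) :
    2 * (v ⬝ᵥ (gram A *ᵥ (A *ᵥ v))) = -(v ⬝ᵥ v) := by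
  set f := gq A v v with hfdef
  have hcont2 : Continuous (fun τ => 2 * gq A v (A *ᵥ v) τ) := continuous_const.mul (continuous_gq _ _)
  have hFTC : ∀ T : ℝ, f T - f 0 = ∫ τ in (0:ℝ)..T, 2 * gq A v (A *ᵥ v) τ := fun T =>
    (intervalIntegral.integral_eq_sub_of_hasDerivAt (fun τ _ => hasDerivAt_gq_self v τ)
      (hcont2.intervalIntegrable 0 T)).symm
  have h1 : Tendsto (fun T => f T - f 0) atTop (𝓝 (0 - f 0)) :=
    (gq_tendsto_zero hA hAi v).sub_const (f 0)
  have h1' : Tendsto (fun T => ∫ τ in (0:ℝ)..T, 2 * gq A v (A *ᵥ v) τ) atTop (𝓝 (0 - f 0)) :=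
    h1.congr hFTC
  have h2 : Tendsto (fun T => ∫ τ in (0:ℝ)..T, 2 * gq A v (A *ᵥ v) τ) atTop
      (𝓝 (∫ τ in Ioi (0:ℝ), 2 * gq A v (A *ᵥ v) τ)) :=
    intervalIntegral_tendsto_integral_Ioi 0 ((gq_integrable hAi v (A *ᵥ v)).const_mul 2)
      tendsto_id
  have h3 : (0 : ℝ) - f 0 = ∫ τ in Ioi (0:ℝ), 2 * gq A v (A *ᵥ v) τ :=
    tendsto_nhds_unique h1' h2
  rw [integral_const_mul, integral_gq hAi v (A *ᵥ v)] at h3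
  have hf0 : f 0 = v ⬝ᵥ v := by
    show gq A v v 0 = v ⬝ᵥ v
    unfold gq
    rw [mexp_zero, Matrix.one_mulVec]
  linarith

lemma quad_upper {A : Matrix (Fin n) (Fin n) ℝ} {γ₁ : ℝ} (hg : mnorm (gram A) ≤ γ₁)
    (u v : Fin n → ℝ) : |u ⬝ᵥ (gram A *ᵥ v)| ≤ γ₁ * (eucNorm u * eucNorm v) := by
  have h1 := abs_dot_le u (gram A *ᵥ v)
  have h2 := eucNorm_mulVec_le (gram A) v
  have h3 := eucNorm_nonneg u
  have h4 := eucNorm_nonneg v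
  have h5 : (0:ℝ) ≤ mnorm (gram A) := by rw [mnorm_eq_norm]; exact norm_nonneg _
  calc |u ⬝ᵥ (gram A *ᵥ v)| ≤ eucNorm u * eucNorm (gram A *ᵥ v) := h1
    _ ≤ eucNorm u * (mnorm (gram A) * eucNorm v) := mul_le_mul_of_nonneg_left h2 h3
    _ ≤ eucNorm u * (γ₁ * eucNorm v) :=
        mul_le_mul_of_nonneg_left (mul_le_mul_of_nonneg_right hg h4) h3
    _ = γ₁ * (eucNorm u * eucNorm v) := by ring

lemma hasDerivAt_quadform {y : ℝ → Fin n → ℝ} {z : Fin n → ℝ} {s : ℝ}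
    (hy : ∀ i, HasDerivAt (fun t => y t i) (z i) s) (S : Matrix (Fin n) (Fin n) ℝ) :
    HasDerivAt (fun t => y t ⬝ᵥ (S *ᵥ y t)) (z ⬝ᵥ (S *ᵥ y s) + y s ⬝ᵥ (S *ᵥ z)) s := by
  have hw : ∀ i, HasDerivAt (fun t => (S *ᵥ y t) i) ((S *ᵥ z) i) s := by
    intro i
    show HasDerivAt (fun t => ∑ j, S i j * y t j) (∑ j, S i j * z j) s
    exact HasDerivAt.fun_sum fun j _ => (hy j).const_mul (S i j)
  exact hasDerivAt_dot hy hw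

lemma gram_diff_bound {A B : Matrix (Fin n) (Fin n) ℝ} {L γ₁ : ℝ}
    (hA : mnorm A ≤ L) (hB : mnorm B ≤ L)
    (hAi : ∀ i j, IntegrableOn
      (fun τ => (mexp (τ • Aᵀ) * mexp (τ • A)) i j) (Set.Ici (0 : ℝ)))
    (hBi : ∀ i j, IntegrableOn
      (fun τ => (mexp (τ • Bᵀ) * mexp (τ • B)) i j) (Set.Ici (0 : ℝ)))
    (hgA : mnorm (gram A) ≤ γ₁) (hgB : mnorm (gram B) ≤ γ₁) (x : Fin n → ℝ) :
    |x ⬝ᵥ ((gram A - gram B) *ᵥ x)| ≤ 2 * γ₁ ^ 2 * mnorm (A - B) * (x ⬝ᵥ x) := by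
  set Q := gram A - gram B with hQ
  set Δ := A - B with hΔ
  set y : ℝ → Fin n → ℝ := fun τ => mexp (τ • A) *ᵥ x with hy
  set φ : ℝ → ℝ := fun τ => y τ ⬝ᵥ (Q *ᵥ y τ) with hφ
  set ψ : ℝ → ℝ := fun τ => -(2 * (y τ ⬝ᵥ (gram B *ᵥ (Δ *ᵥ y τ)))) with hψ
  have hγ0 : 0 ≤ γ₁ := le_trans (by rw [mnorm_eq_norm]; exact norm_nonneg _) hgA
  have hΔ0 : 0 ≤ mnorm Δ := by rw [mnorm_eq_norm]; exact norm_nonneg _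
  have hQsymm : Qᵀ = Q := by rw [hQ, Matrix.transpose_sub, gram_symm, gram_symm]
  have hyd : ∀ τ i, HasDerivAt (fun t => y t i) ((A *ᵥ y τ) i) τ :=
    fun τ i => hasDerivAt_yvec A x τ i
  have hycont : ∀ i, Continuous (fun τ => y τ i) := fun i => continuous_yvec A x i
  have hφd : ∀ τ, HasDerivAt φ (ψ τ) τ := by
    intro τ
    have h := hasDerivAt_quadform (hyd τ) Q
    have e : (A *ᵥ y τ) ⬝ᵥ (Q *ᵥ y τ) + y τ ⬝ᵥ (Q *ᵥ (A *ᵥ y τ)) = ψ τ := by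
      have h1 : (A *ᵥ y τ) ⬝ᵥ (Q *ᵥ y τ) = y τ ⬝ᵥ (Q *ᵥ (A *ᵥ y τ)) := dot_symm Q hQsymm _ _
      have h2 : y τ ⬝ᵥ (Q *ᵥ (A *ᵥ y τ)) = y τ ⬝ᵥ (gram A *ᵥ (A *ᵥ y τ))
          - y τ ⬝ᵥ (gram B *ᵥ (A *ᵥ y τ)) := by
        rw [hQ, Matrix.sub_mulVec, dotProduct_sub]
      have h3 : 2 * (y τ ⬝ᵥ (gram A *ᵥ (A *ᵥ y τ))) = -(y τ ⬝ᵥ y τ) := lyap hA hAi (y τ)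
      have h4 : A *ᵥ y τ = B *ᵥ y τ + Δ *ᵥ y τ := by
        rw [hΔ, Matrix.sub_mulVec]
        funext i
        simp
      have h5 : 2 * (y τ ⬝ᵥ (gram B *ᵥ (B *ᵥ y τ))) = -(y τ ⬝ᵥ y τ) := lyap hB hBi (y τ)
      have h6 : y τ ⬝ᵥ (gram B *ᵥ (A *ᵥ y τ)) = y τ ⬝ᵥ (gram B *ᵥ (B *ᵥ y τ))
          + y τ ⬝ᵥ (gram B *ᵥ (Δ *ᵥ y τ)) := by
        rw [h4, Matrix.mulVec_add, dotProduct_add]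
      show _ = -(2 * (y τ ⬝ᵥ (gram B *ᵥ (Δ *ᵥ y τ))))
      linarith
    have h' := h
    rw [e] at h'
    exact h'
  have hψcont : Continuous ψ := by
    have hw1 : ∀ i, Continuous (fun τ => (Δ *ᵥ y τ) i) := by
      intro i
      show Continuous (fun τ => ∑ j, Δ i j * y τ j)
      exact continuous_finset_sum _ fun j _ => continuous_const.mul (hycont j)
    have hw2 : ∀ i, Continuous (fun τ => (gram B *ᵥ (Δ *ᵥ y τ)) i) := by
      intro i
      show Continuous (fun τ => ∑ j, gram B i j * (Δ *ᵥ y τ) j)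
      exact continuous_finset_sum _ fun j _ => continuous_const.mul (hw1 j)
    have hc : Continuous (fun τ => y τ ⬝ᵥ (gram B *ᵥ (Δ *ᵥ y τ))) := by
      show Continuous (fun τ => ∑ i, y τ i * (gram B *ᵥ (Δ *ᵥ y τ)) i)
      exact continuous_finset_sum _ fun i _ => (hycont i).mul (hw2 i)
    show Continuous fun τ => -(2 * (y τ ⬝ᵥ (gram B *ᵥ (Δ *ᵥ y τ))))
    exact (continuous_const.mul hc).neg
  have hψb : ∀ τ, |ψ τ| ≤ 2 * γ₁ * mnorm Δ * gq A x x τ := by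
    intro τ
    have h1 : |y τ ⬝ᵥ (gram B *ᵥ (Δ *ᵥ y τ))| ≤ γ₁ * (eucNorm (y τ) * eucNorm (Δ *ᵥ y τ)) :=
      quad_upper hgB _ _
    have h2 : eucNorm (Δ *ᵥ y τ) ≤ mnorm Δ * eucNorm (y τ) := eucNorm_mulVec_le _ _
    have h3 : gq A x x τ = eucNorm (y τ) ^ 2 := gq_self_eq_sq x τ
    have h4 := eucNorm_nonneg (y τ)
    have habs : |ψ τ| = 2 * |y τ ⬝ᵥ (gram B *ᵥ (Δ *ᵥ y τ))| := by
      rw [hψ, abs_neg, abs_mul]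
      norm_num
    have h5 : |y τ ⬝ᵥ (gram B *ᵥ (Δ *ᵥ y τ))| ≤ γ₁ * (eucNorm (y τ) * (mnorm Δ * eucNorm (y τ))) :=
      h1.trans (mul_le_mul_of_nonneg_left (mul_le_mul_of_nonneg_left h2 h4) hγ0)
    rw [habs, h3]
    nlinarith [h5]
  have hFTC : ∀ T : ℝ, φ T - φ 0 = ∫ τ in (0:ℝ)..T, ψ τ := fun T =>
    (intervalIntegral.integral_eq_sub_of_hasDerivAt (fun τ _ => hφd τ)
      (hψcont.intervalIntegrable 0 T)).symm
  have hIbound : ∀ T : ℝ, 0 ≤ T →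
      |∫ τ in (0:ℝ)..T, ψ τ| ≤ 2 * γ₁ ^ 2 * mnorm Δ * (x ⬝ᵥ x) := by
    intro T hT
    have h1 : |∫ τ in (0:ℝ)..T, ψ τ| ≤ ∫ τ in (0:ℝ)..T, |ψ τ| :=
      intervalIntegral.abs_integral_le_integral_abs hT
    have h2 : ∫ τ in (0:ℝ)..T, |ψ τ| ≤ ∫ τ in (0:ℝ)..T, 2 * γ₁ * mnorm Δ * gq A x x τ := by
      apply intervalIntegral.integral_mono_on hT (hψcont.abs.intervalIntegrable 0 T)
        ((continuous_const.mul (continuous_gq (A := A) x x)).intervalIntegrable 0 T)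
      exact fun τ _ => hψb τ
    have h3 : ∫ τ in (0:ℝ)..T, 2 * γ₁ * mnorm Δ * gq A x x τ
        = 2 * γ₁ * mnorm Δ * ∫ τ in (0:ℝ)..T, gq A x x τ := by
      rw [intervalIntegral.integral_const_mul]
    have h4 : ∫ τ in (0:ℝ)..T, gq A x x τ ≤ ∫ τ in Ioi (0:ℝ), gq A x x τ := by
      rw [intervalIntegral.integral_of_le hT]
      exact setIntegral_mono_set (gq_integrable hAi x x)
        (Filter.Eventually.of_forall fun τ => gq_self_nonneg x τ)
        (HasSubset.Subset.eventuallyLE Ioc_subset_Ioi_self)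
    have h5 : ∫ τ in Ioi (0:ℝ), gq A x x τ ≤ γ₁ * (x ⬝ᵥ x) := by
      rw [integral_gq hAi x x]
      have hu := quad_upper hgA x x
      have h6 : eucNorm x * eucNorm x = x ⬝ᵥ x := by rw [← eucNorm_sq]; ring
      calc x ⬝ᵥ (gram A *ᵥ x) ≤ |x ⬝ᵥ (gram A *ᵥ x)| := le_abs_self _
        _ ≤ γ₁ * (eucNorm x * eucNorm x) := hu
        _ = γ₁ * (x ⬝ᵥ x) := by rw [h6]
    have h7 : (0:ℝ) ≤ ∫ τ in (0:ℝ)..T, gq A x x τ :=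
      intervalIntegral.integral_nonneg hT fun τ _ => gq_self_nonneg x τ
    have hc0 : 0 ≤ 2 * γ₁ * mnorm Δ := by positivity
    have h8 := mul_le_mul_of_nonneg_left (h4.trans h5) hc0
    nlinarith [h8]
  have hφlim : Tendsto (fun T => |φ T|) atTop (𝓝 0) := by
    have hQ0 : 0 ≤ mnorm Q := by rw [mnorm_eq_norm]; exact norm_nonneg _
    have hb : ∀ T, |φ T| ≤ mnorm Q * gq A x x T := by
      intro T
      have h1 := abs_dot_le (y T) (Q *ᵥ y T)
      have h2 := eucNorm_mulVec_le Q (y T)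
      have h3 : gq A x x T = eucNorm (y T) ^ 2 := gq_self_eq_sq x T
      have h4 := eucNorm_nonneg (y T)
      have h5 : |y T ⬝ᵥ (Q *ᵥ y T)| ≤ eucNorm (y T) * (mnorm Q * eucNorm (y T)) :=
        h1.trans (mul_le_mul_of_nonneg_left h2 h4)
      rw [hφ, h3]
      nlinarith [h5]
    have hm := (gq_tendsto_zero hA hAi x).const_mul (mnorm Q)
    exact squeeze_zero' (Filter.Eventually.of_forall fun T => abs_nonneg _)
      (Filter.Eventually.of_forall hb) (by simpa using hm)
  have hφ0 : φ 0 = x ⬝ᵥ (Q *ᵥ x) := by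
    have hy0 : y 0 = x := by rw [hy]; simp only [mexp_zero, Matrix.one_mulVec]
    show y 0 ⬝ᵥ (Q *ᵥ y 0) = x ⬝ᵥ (Q *ᵥ x)
    rw [hy0]
  have hfin : ∀ᶠ T in atTop, |x ⬝ᵥ (Q *ᵥ x)| ≤ |φ T| + 2 * γ₁ ^ 2 * mnorm Δ * (x ⬝ᵥ x) := by
    filter_upwards [eventually_ge_atTop (0:ℝ)] with T hT
    have h1 := hFTC T
    have h2 := hIbound T hT
    have h9 : x ⬝ᵥ (Q *ᵥ x) = φ T - ∫ τ in (0:ℝ)..T, ψ τ := by rw [← hφ0]; linarith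
    rw [h9]
    have h10 : |φ T - ∫ τ in (0:ℝ)..T, ψ τ| ≤ |φ T| + |∫ τ in (0:ℝ)..T, ψ τ| := by
      rw [sub_eq_add_neg]
      exact (abs_add_le _ _).trans (by rw [abs_neg])
    linarith
  have hlim2 : Tendsto (fun T => |φ T| + 2 * γ₁ ^ 2 * mnorm Δ * (x ⬝ᵥ x)) atTop
      (𝓝 (0 + 2 * γ₁ ^ 2 * mnorm Δ * (x ⬝ᵥ x))) := hφlim.add_const _
  have := ge_of_tendsto hlim2 hfin
  calc |x ⬝ᵥ (Q *ᵥ x)| ≤ 0 + 2 * γ₁ ^ 2 * mnorm Δ * (x ⬝ᵥ x) := this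
    _ = 2 * γ₁ ^ 2 * mnorm Δ * (x ⬝ᵥ x) := by ring


theorem main
    {n : ℕ} (M M' : ℝ → Matrix (Fin n) (Fin n) ℝ)
    (hderiv : ∀ t, 0 ≤ t → ∀ i j, HasDerivAt (fun s => M s i j) (M' t i j) t)
    (hcont : ∀ i j, Continuous fun t => M' t i j)
    (L : ℝ) (hL : ∀ t, 0 ≤ t → mnorm (M t) ≤ L)
    (σ : ℝ) (hσ : σ < 0)
    (hspec : ∀ t, 0 ≤ t → ∀ μ ∈ spectrum ℂ ((M t).map Complex.ofReal), μ.re ≤ σ)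
    (γ₁ : ℝ) (hγ₁ : 0 < γ₁)
    (hint : ∀ t, 0 ≤ t → ∀ i j, IntegrableOn
        (fun τ => (mexp (τ • (M t)ᵀ) * mexp (τ • M t)) i j) (Set.Ici (0 : ℝ)))
    (hgram : ∀ t, 0 ≤ t → mnorm (gram (M t)) ≤ γ₁)
    (r : ℝ) (hr : r < 1 / (2 * γ₁ ^ 2))
    (hdot : ∀ t, 0 ≤ t → mnorm (M' t) ≤ r) :
    ∃ c > 0, ∃ lam > 0, ∀ x : ℝ → Fin n → ℝ,
      (∀ t, 0 ≤ t → ∀ i, HasDerivAt (fun s => x s i) ((M t).mulVec (x t) i) t) →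
      ∀ t, 0 ≤ t → eucNorm (x t) ≤ c * Real.exp (-lam * t) * eucNorm (x 0) := by
  classical
  rcases Nat.eq_zero_or_pos n with hn | hn
  · subst hn
    refine ⟨1, one_pos, 1, one_pos, ?_⟩
    intro x _ t _
    have h0 : ∀ v : Fin 0 → ℝ, eucNorm v = 0 := by
      intro v; unfold eucNorm; simp
    rw [h0, h0]
    simp
  -- n ≥ 1
  haveI : Nonempty (Fin n) := ⟨⟨0, hn⟩⟩
  have hLpos : 0 < L := by
    have hne : (spectrum ℂ ((M 0).map Complex.ofReal)).Nonempty :=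
      spectrum.nonempty_of_isAlgClosed_of_finiteDimensional ℂ _
    obtain ⟨μ, hμ⟩ := hne
    have hμre := hspec 0 le_rfl μ hμ
    have hM0 : M 0 ≠ 0 := by
      intro h
      rw [h] at hμ
      have hz : (0 : Matrix (Fin n) (Fin n) ℝ).map Complex.ofReal = 0 := by
        ext i j; simp
      rw [hz] at hμ
      rw [spectrum.zero_eq] at hμ
      rw [Set.mem_singleton_iff] at hμ
      rw [hμ] at hμre
      simp at hμre
      linarith
    have h1 : 0 < mnorm (M 0) := by
      rw [mnorm_eq_norm]
      exact norm_pos_iff.2 hM0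
    exact lt_of_lt_of_le h1 (hL 0 le_rfl)
  have hr0 : 0 ≤ r := le_trans (by rw [mnorm_eq_norm]; exact norm_nonneg _) (hdot 0 le_rfl)
  rw [lt_div_iff₀ (by positivity)] at hr
  -- hr : r * (2 * γ₁ ^ 2) < 1
  set k : ℝ := (1 - 2 * γ₁ ^ 2 * r) / γ₁ with hkdef
  have hknum : 0 < 1 - 2 * γ₁ ^ 2 * r := by nlinarith
  have hk : 0 < k := div_pos hknum hγ₁
  have hkγ : k * γ₁ = 1 - 2 * γ₁ ^ 2 * r := by
    rw [hkdef]; field_simp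
  refine ⟨Real.sqrt (γ₁ * Real.exp (2 * L)), Real.sqrt_pos.2 (by positivity), k / 2,
    by positivity, ?_⟩
  intro x hx t ht
  -- Lipschitz bound for M
  have hMd : ∀ t : ℝ, 0 ≤ t → HasDerivAt M (M' t) t := by
    intro t ht
    have hrep : ∀ C : Matrix (Fin n) (Fin n) ℝ,
        C = ∑ i, ∑ j, C i j • Matrix.single i j (1:ℝ) := by
      intro C
      conv_lhs => rw [Matrix.matrix_eq_sum_single C]
      refine Finset.sum_congr rfl fun i _ => Finset.sum_congr rfl fun j _ => ?_
      rw [Matrix.smul_single, smul_eq_mul, mul_one]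
    have h2 : HasDerivAt (fun u => ∑ i, ∑ j, M u i j • Matrix.single i j (1:ℝ))
        (∑ i, ∑ j, M' t i j • Matrix.single i j (1:ℝ)) t :=
      HasDerivAt.fun_sum fun i _ => HasDerivAt.fun_sum fun j _ => (hderiv t ht i j).smul_const _
    have h3 : (fun u => ∑ i, ∑ j, M u i j • Matrix.single i j (1:ℝ)) = M :=
      funext fun u => (hrep (M u)).symm
    rw [h3, ← hrep (M' t)] at h2
    exact h2
  have hMlip : ∀ s t : ℝ, 0 ≤ s → s ≤ t → mnorm (M t - M s) ≤ r * (t - s) := by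
    intro s t hs hst
    have key := norm_image_sub_le_of_norm_deriv_le_segment'
      (f := M) (f' := M') (C := r) (a := s) (b := t)
      (fun u hu => (hMd u (le_trans hs hu.1)).hasDerivWithinAt)
      (fun u hu => by rw [← mnorm_eq_norm]; exact hdot u (le_trans hs hu.1))
      t ⟨hst, le_rfl⟩
    rw [← mnorm_eq_norm] at key
    exact key
  have hMlip' : ∀ s t : ℝ, 0 ≤ s → 0 ≤ t → mnorm (M t - M s) ≤ r * |t - s| := by
    intro s t hs ht
    rcases le_total s t with h | h
    · rw [abs_of_nonneg (by linarith)]; exact hMlip s t hs h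
    · rw [abs_of_nonpos (by linarith)]
      rw [mnorm_eq_norm, norm_sub_rev, ← mnorm_eq_norm]
      have h2 := hMlip t s ht h
      have : r * -(t - s) = r * (s - t) := by ring
      rw [this]
      exact h2
  set V : ℝ → ℝ := fun u => x u ⬝ᵥ (gram (M u) *ᵥ x u) with hVdef
  have hxc : ∀ s : ℝ, 0 ≤ s → ∀ i, ContinuousAt (fun z => x z i) s :=
    fun s hs i => (hx s hs i).continuousAt
  have hdotc : ∀ s : ℝ, 0 ≤ s → ContinuousAt (fun z => x z ⬝ᵥ x z) s := by
    intro s hs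
    show Filter.Tendsto (fun z => ∑ i, x z i * x z i) (𝓝 s) (𝓝 (∑ i, x s i * x s i))
    exact tendsto_finset_sum _ fun i _ => ((hxc s hs i).mul (hxc s hs i))
  have hUcont : ∀ (C : Matrix (Fin n) (Fin n) ℝ) (s : ℝ), 0 ≤ s →
      ContinuousAt (fun z => x z ⬝ᵥ (C *ᵥ x z)) s := by
    intro C s hs
    have hwc : ∀ i, ContinuousAt (fun z => (C *ᵥ x z) i) s := by
      intro i
      show Filter.Tendsto (fun z => ∑ j, C i j * x z j) (𝓝 s) (𝓝 (∑ j, C i j * x s j))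
      exact tendsto_finset_sum _ fun j _ => (tendsto_const_nhds.mul (hxc s hs j))
    show Filter.Tendsto (fun z => ∑ i, x z i * (C *ᵥ x z) i) (𝓝 s)
      (𝓝 (∑ i, x s i * (C *ᵥ x s) i))
    exact tendsto_finset_sum _ fun i _ => ((hxc s hs i).mul (hwc i))
  have hU : ∀ s : ℝ, 0 ≤ s → HasDerivAt (fun z => x z ⬝ᵥ (gram (M s) *ᵥ x z))
      (-(x s ⬝ᵥ x s)) s := by
    intro s hs
    have h := hasDerivAt_quadform (y := x) (z := (M s) *ᵥ (x s)) (s := s)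
      (fun i => hx s hs i) (gram (M s))
    have e : ((M s) *ᵥ (x s)) ⬝ᵥ (gram (M s) *ᵥ x s)
        + x s ⬝ᵥ (gram (M s) *ᵥ ((M s) *ᵥ (x s))) = -(x s ⬝ᵥ x s) := by
      have h1 : ((M s) *ᵥ (x s)) ⬝ᵥ (gram (M s) *ᵥ x s)
          = x s ⬝ᵥ (gram (M s) *ᵥ ((M s) *ᵥ (x s))) := dot_symm _ (gram_symm _) _ _
      have h2 : 2 * (x s ⬝ᵥ (gram (M s) *ᵥ ((M s) *ᵥ (x s)))) = -(x s ⬝ᵥ x s) :=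
        lyap (hL s hs) (hint s hs) (x s)
      linarith
    rw [e] at h
    exact h
  -- quadratic bound difference
  have hVdiff : ∀ z s : ℝ, 0 ≤ z → 0 ≤ s →
      |x z ⬝ᵥ (gram (M z) *ᵥ x z) - x z ⬝ᵥ (gram (M s) *ᵥ x z)|
        ≤ 2 * γ₁ ^ 2 * (r * |z - s|) * (x z ⬝ᵥ x z) := by
    intro z s hz hs
    have h1 : x z ⬝ᵥ (gram (M z) *ᵥ x z) - x z ⬝ᵥ (gram (M s) *ᵥ x z)
        = x z ⬝ᵥ ((gram (M z) - gram (M s)) *ᵥ x z) := by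
      rw [Matrix.sub_mulVec, dotProduct_sub]
    rw [h1]
    have h2 := gram_diff_bound (hL z hz) (hL s hs) (hint z hz) (hint s hs)
      (hgram z hz) (hgram s hs) (x z)
    have h3 := hMlip' s z hs hz
    have h4 : 2 * γ₁ ^ 2 * mnorm (M z - M s) * (x z ⬝ᵥ x z)
        ≤ 2 * γ₁ ^ 2 * (r * |z - s|) * (x z ⬝ᵥ x z) := by
      have hX0 := dot_self_nonneg (x z)
      have h5 := mul_le_mul_of_nonneg_right
        (mul_le_mul_of_nonneg_left h3 (by positivity : (0:ℝ) ≤ 2 * γ₁ ^ 2)) hX0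
      linarith [h5]
    exact h2.trans h4
  have hVle : ∀ s : ℝ, 0 ≤ s → V s ≤ γ₁ * (x s ⬝ᵥ x s) := by
    intro s hs
    have h := quad_upper (hgram s hs) (x s) (x s)
    have h6 : eucNorm (x s) * eucNorm (x s) = x s ⬝ᵥ x s := by
      rw [← eucNorm_sq]; ring
    calc V s ≤ |x s ⬝ᵥ (gram (M s) *ᵥ x s)| := le_abs_self _
      _ ≤ γ₁ * (eucNorm (x s) * eucNorm (x s)) := h
      _ = γ₁ * (x s ⬝ᵥ x s) := by rw [h6]
  -- Gronwall on [0, t]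
  have hGron : V t ≤ V 0 * Real.exp (-k * t) := by
    have hcontV : ContinuousOn V (Icc 0 t) := by
      intro s hs
      have hs0 : (0:ℝ) ≤ s := hs.1
      rw [ContinuousWithinAt, tendsto_iff_dist_tendsto_zero]
      have hb : ∀ z ∈ Icc (0:ℝ) t, dist (V z) (V s)
          ≤ |x z ⬝ᵥ (gram (M s) *ᵥ x z) - x s ⬝ᵥ (gram (M s) *ᵥ x s)|
            + 2 * γ₁ ^ 2 * (r * |z - s|) * (x z ⬝ᵥ x z) := by
        intro z hz
        rw [Real.dist_eq]
        have h1 := hVdiff z s hz.1 hs0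
        set a := x z ⬝ᵥ (gram (M z) *ᵥ x z)
        set b := x z ⬝ᵥ (gram (M s) *ᵥ x z)
        set c := x s ⬝ᵥ (gram (M s) *ᵥ x s)
        have : V z - V s = (a - b) + (b - c) := by rw [hVdef]; ring
        rw [this]
        calc |(a - b) + (b - c)| ≤ |a - b| + |b - c| := abs_add_le _ _
          _ ≤ 2 * γ₁ ^ 2 * (r * |z - s|) * (x z ⬝ᵥ x z) + |b - c| := by linarith
          _ = |b - c| + 2 * γ₁ ^ 2 * (r * |z - s|) * (x z ⬝ᵥ x z) := by ring
      have hlim : Filter.Tendsto (fun z =>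
          |x z ⬝ᵥ (gram (M s) *ᵥ x z) - x s ⬝ᵥ (gram (M s) *ᵥ x s)|
            + 2 * γ₁ ^ 2 * (r * |z - s|) * (x z ⬝ᵥ x z)) (𝓝[Icc 0 t] s) (𝓝 0) := by
        have hU1 : Filter.Tendsto (fun z =>
            |x z ⬝ᵥ (gram (M s) *ᵥ x z) - x s ⬝ᵥ (gram (M s) *ᵥ x s)|) (𝓝 s) (𝓝 0) := by
          have h1 : Filter.Tendsto (fun z =>
              x z ⬝ᵥ (gram (M s) *ᵥ x z) - x s ⬝ᵥ (gram (M s) *ᵥ x s)) (𝓝 s) (𝓝 0) := by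
            have h2 := (hUcont (gram (M s)) s hs0).sub_const (x s ⬝ᵥ (gram (M s) *ᵥ x s))
            simpa using h2
          simpa using h1.abs
        have hU2 : Filter.Tendsto (fun z =>
            2 * γ₁ ^ 2 * (r * |z - s|) * (x z ⬝ᵥ x z)) (𝓝 s) (𝓝 0) := by
          have h1 : Filter.Tendsto (fun z : ℝ => |z - s|) (𝓝 s) (𝓝 0) := by
            have h0 : Continuous (fun z : ℝ => |z - s|) :=
              (continuous_id.sub continuous_const).abs
            have := h0.tendsto s
            simpa using this
          have h2 := ((h1.const_mul r).const_mul (2 * γ₁ ^ 2)).mul (hdotc s hs0)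
          simpa [mul_assoc] using h2
        have := (hU1.add hU2)
        simp only [add_zero] at this
        exact this.mono_left nhdsWithin_le_nhds
      refine squeeze_zero' (Filter.Eventually.of_forall fun z => dist_nonneg)
        (eventually_mem_nhdsWithin.mono fun z hz => hb z hz) hlim
    have hslope : ∀ s ∈ Ico (0:ℝ) t, ∀ ρ : ℝ,
        (fun u => -(1 - 2 * γ₁ ^ 2 * r) * (x u ⬝ᵥ x u)) s < ρ →
        ∃ᶠ z in 𝓝[>] s, (z - s)⁻¹ * (V z - V s) < ρ := by
      intro s hs ρ hρ
      have hs0 : (0:ℝ) ≤ s := hs.1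
      set U : ℝ → ℝ := fun z => x z ⬝ᵥ (gram (M s) *ᵥ x z) with hUdef
      have hslopeU : Filter.Tendsto (fun z => (z - s)⁻¹ * (U z - U s)) (𝓝[>] s)
          (𝓝 (-(x s ⬝ᵥ x s))) := by
        have h1 := (hasDerivAt_iff_tendsto_slope).1 (hU s hs0)
        have h2 : Filter.Tendsto (slope U s) (𝓝[>] s) (𝓝 (-(x s ⬝ᵥ x s))) :=
          h1.mono_left (nhdsWithin_mono s fun z hz => ne_of_gt hz)
        refine h2.congr fun z => ?_
        rw [slope_def_field, div_eq_inv_mul]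
      have hX : Filter.Tendsto (fun z => 2 * γ₁ ^ 2 * r * (x z ⬝ᵥ x z)) (𝓝[>] s)
          (𝓝 (2 * γ₁ ^ 2 * r * (x s ⬝ᵥ x s))) :=
        ((hdotc s hs0).const_mul _).mono_left nhdsWithin_le_nhds
      have hsum := hslopeU.add hX
      have hlt : -(x s ⬝ᵥ x s) + 2 * γ₁ ^ 2 * r * (x s ⬝ᵥ x s) < ρ := by
        have : -(1 - 2 * γ₁ ^ 2 * r) * (x s ⬝ᵥ x s)
            = -(x s ⬝ᵥ x s) + 2 * γ₁ ^ 2 * r * (x s ⬝ᵥ x s) := by ring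
        rw [← this]
        exact hρ
      have hev : ∀ᶠ z in 𝓝[>] s,
          (z - s)⁻¹ * (U z - U s) + 2 * γ₁ ^ 2 * r * (x z ⬝ᵥ x z) < ρ :=
        hsum.eventually_lt_const hlt
      have hle : ∀ᶠ z in 𝓝[>] s, (z - s)⁻¹ * (V z - V s)
          ≤ (z - s)⁻¹ * (U z - U s) + 2 * γ₁ ^ 2 * r * (x z ⬝ᵥ x z) := by
        filter_upwards [self_mem_nhdsWithin] with z hz
        have hzs : s < z := hz
        have hz0 : (0:ℝ) ≤ z := le_trans hs0 hzs.le
        have hd := hVdiff z s hz0 hs0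
        have h1 : V z - V s ≤ (U z - U s) + 2 * γ₁ ^ 2 * (r * (z - s)) * (x z ⬝ᵥ x z) := by
          have habs : x z ⬝ᵥ (gram (M z) *ᵥ x z) - x z ⬝ᵥ (gram (M s) *ᵥ x z)
              ≤ 2 * γ₁ ^ 2 * (r * |z - s|) * (x z ⬝ᵥ x z) := (le_abs_self _).trans hd
          rw [abs_of_nonneg (by linarith : (0:ℝ) ≤ z - s)] at habs
          have : V z - V s = (x z ⬝ᵥ (gram (M z) *ᵥ x z) - x z ⬝ᵥ (gram (M s) *ᵥ x z))
              + (U z - U s) := by rw [hVdef, hUdef]; ring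
          linarith
        have hinv : (0:ℝ) < (z - s)⁻¹ := inv_pos.2 (by linarith)
        have h2 := mul_le_mul_of_nonneg_left h1 hinv.le
        have h3 : (z - s)⁻¹ * ((U z - U s) + 2 * γ₁ ^ 2 * (r * (z - s)) * (x z ⬝ᵥ x z))
            = (z - s)⁻¹ * (U z - U s) + 2 * γ₁ ^ 2 * r * (x z ⬝ᵥ x z) := by
          have hne : z - s ≠ 0 := by linarith
          field_simp
        rw [h3] at h2
        exact h2
      have := hle.and hev
      refine (this.mono fun z hz => lt_of_le_of_lt hz.1 hz.2).frequently
    have hbound : ∀ s ∈ Ico (0:ℝ) t,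
        (fun u => -(1 - 2 * γ₁ ^ 2 * r) * (x u ⬝ᵥ x u)) s ≤ -k * V s + 0 := by
      intro s hs
      have h1 := hVle s hs.1
      have h2 : k * V s ≤ k * (γ₁ * (x s ⬝ᵥ x s)) := mul_le_mul_of_nonneg_left h1 hk.le
      have h3 : k * (γ₁ * (x s ⬝ᵥ x s)) = (1 - 2 * γ₁ ^ 2 * r) * (x s ⬝ᵥ x s) := by
        rw [← mul_assoc, hkγ]
      simp only [add_zero]
      nlinarith
    have hg := le_gronwallBound_of_liminf_deriv_right_le hcontV hslope le_rfl hbound t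
      ⟨le_rfl.trans ht, le_rfl⟩
    rw [gronwallBound_ε0] at hg
    simpa using hg
  -- conclude
  have hlow := quad_lower (hL t ht) (hint t ht) (x t)
  have hV0 : V 0 ≤ γ₁ * (x 0 ⬝ᵥ x 0) := hVle 0 le_rfl
  have hexp1 : Real.exp (-(2*L)) * Real.exp (2*L) = 1 := by
    rw [← Real.exp_add]; simp
  have hxt : x t ⬝ᵥ x t ≤ γ₁ * Real.exp (2*L) * Real.exp (-k*t) * (x 0 ⬝ᵥ x 0) := by
    have h1 : x t ⬝ᵥ x t ≤ Real.exp (2*L) * V t := by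
      have h2 := mul_le_mul_of_nonneg_right hlow (Real.exp_pos (2*L)).le
      rw [mul_assoc, hexp1, mul_one] at h2
      linarith [h2]
    have h3 : V t ≤ γ₁ * (x 0 ⬝ᵥ x 0) * Real.exp (-k*t) := by
      have h4 := mul_le_mul_of_nonneg_right hV0 (Real.exp_pos (-k*t)).le
      calc V t ≤ V 0 * Real.exp (-k * t) := hGron
        _ ≤ γ₁ * (x 0 ⬝ᵥ x 0) * Real.exp (-k*t) := h4
    have h5 : Real.exp (2*L) * V t ≤ Real.exp (2*L) * (γ₁ * (x 0 ⬝ᵥ x 0) * Real.exp (-k*t)) :=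
      mul_le_mul_of_nonneg_left h3 (Real.exp_pos (2*L)).le
    calc x t ⬝ᵥ x t ≤ Real.exp (2*L) * V t := h1
      _ ≤ Real.exp (2*L) * (γ₁ * (x 0 ⬝ᵥ x 0) * Real.exp (-k*t)) := h5
      _ = γ₁ * Real.exp (2*L) * Real.exp (-k*t) * (x 0 ⬝ᵥ x 0) := by ring
  have heuc : ∀ v : Fin n → ℝ, eucNorm v = Real.sqrt (v ⬝ᵥ v) := by
    intro v
    rw [← eucNorm_sq, Real.sqrt_sq (eucNorm_nonneg v)]
  have hsqrtexp : Real.sqrt (Real.exp (-k*t)) = Real.exp (-(k/2)*t) := by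
    rw [show -k*t = (-(k/2)*t) + (-(k/2)*t) by ring, Real.exp_add,
      Real.sqrt_mul_self (Real.exp_nonneg _)]
  calc eucNorm (x t) = Real.sqrt (x t ⬝ᵥ x t) := heuc _
    _ ≤ Real.sqrt (γ₁ * Real.exp (2*L) * Real.exp (-k*t) * (x 0 ⬝ᵥ x 0)) :=
        Real.sqrt_le_sqrt hxt
    _ = Real.sqrt (γ₁ * Real.exp (2*L)) * Real.exp (-(k/2)*t) * eucNorm (x 0) := by
        rw [Real.sqrt_mul (by positivity), Real.sqrt_mul (by positivity), hsqrtexp, heuc]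
    _ = Real.sqrt (γ₁ * Real.exp (2 * L)) * Real.exp (-(k / 2) * t) * eucNorm (x 0) := by ring

end LTVaux

/-- **GES of a slowly time-varying linear system, pointwise bound on `Ṁ`.**
`M : [0,∞) → ℝ^{n×n}` is continuously differentiable (derivative `M'`), `‖M(t)‖ ≤ L`,
`sup_{t≥0} s₁(M(t)) < 0` (encoded by `σ < 0` bounding the real parts of all eigenvalues),
`‖∫₀^∞ exp(M(t)ᵀτ)exp(M(t)τ)dτ‖ ≤ γ₁`, and `sup_{t≥0}‖Ṁ(t)‖ < 1/(2γ₁²)`.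
Then the origin of `ẋ = M(t)x` is globally exponentially stable. -/
theorem ltv_GES_pointwise_slow_variation
    {n : ℕ} (M M' : ℝ → Matrix (Fin n) (Fin n) ℝ)
    (hderiv : ∀ t, 0 ≤ t → ∀ i j, HasDerivAt (fun s => M s i j) (M' t i j) t)
    (hcont : ∀ i j, Continuous fun t => M' t i j)
    (L : ℝ) (hL : ∀ t, 0 ≤ t → mnorm (M t) ≤ L)
    (σ : ℝ) (hσ : σ < 0)
    (hspec : ∀ t, 0 ≤ t → ∀ μ ∈ spectrum ℂ ((M t).map Complex.ofReal), μ.re ≤ σ)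
    (γ₁ : ℝ) (hγ₁ : 0 < γ₁)
    (hint : ∀ t, 0 ≤ t → ∀ i j, IntegrableOn
        (fun τ => (mexp (τ • (M t)ᵀ) * mexp (τ • M t)) i j) (Set.Ici (0 : ℝ)))
    (hgram : ∀ t, 0 ≤ t → mnorm (gram (M t)) ≤ γ₁)
    (r : ℝ) (hr : r < 1 / (2 * γ₁ ^ 2))
    (hdot : ∀ t, 0 ≤ t → mnorm (M' t) ≤ r) :
    ∃ c > 0, ∃ lam > 0, ∀ x : ℝ → Fin n → ℝ,
      (∀ t, 0 ≤ t → ∀ i, HasDerivAt (fun s => x s i) ((M t).mulVec (x t) i) t) →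
      ∀ t, 0 ≤ t → eucNorm (x t) ≤ c * Real.exp (-lam * t) * eucNorm (x 0) := by
  exact LTVaux.main M M' hderiv hcont L hL σ hσ hspec γ₁ hγ₁ hint hgram r hr hdot
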